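/- For every x ∈ (0, π/2) and every integer m ≥ 2, |2·(sin x / x) + (tan x)/x - (3 + (1/cos x)·Σ_{k=2}^{m} (-1)^{k} C(k) x^{2k})| < C(m+1) x^{2m+2} / cos x. -/

import Mathlib

open Real Finset

/-- The coefficient `C(k) = 2·(4^k - 3k - 1)/(2k+1)!`. -/
noncomputable def wchC (k : ℕ) : ℝ :=
  2 * ((4 : ℝ) ^ k - 3 * (k : ℝ) - 1) / (Nat.factorial (2 * k + 1) : ℝ)

lemma wch_nat_ineq : ∀ n : ℕ, 2 ≤ n → (3 * n + 2 : ℝ) ≤ 4 ^ n := by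
  intro n hn
  induction n with
  | zero => omega
  | succ k ih =>
    rcases Nat.lt_or_ge k 2 with h | h
    · interval_cases k
      · omega
      · norm_num
    · have := ih (by omega)
      have h4 : (16 : ℝ) ≤ 4 ^ k := by
        calc (16:ℝ) = 4^2 := by norm_num
        _ ≤ 4^k := by apply pow_le_pow_right₀ (by norm_num) h
      push_cast
      push_cast at this
      calc (3:ℝ)*(k+1)+2 = (3*k+2) + 3 := by ring
        _ ≤ 4^k + 4^k := by linarith
        _ ≤ 4^k*4 := by linarith [pow_pos (show (0:ℝ)<4 by norm_num) k]
        _ = 4^(k+1) := by ring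

lemma wch_nat_ineq2 : ∀ n : ℕ, 2 ≤ n → (15 * n + 2 : ℝ) ≤ 2 * 4 ^ n := by
  intro n hn
  induction n with
  | zero => omega
  | succ k ih =>
    rcases Nat.lt_or_ge k 2 with h | h
    · interval_cases k
      · omega
      · norm_num
    · have := ih (by omega)
      have h4 : (16 : ℝ) ≤ 4 ^ k := by
        calc (16:ℝ) = 4^2 := by norm_num
        _ ≤ 4^k := by apply pow_le_pow_right₀ (by norm_num) h
      push_cast
      push_cast at this
      calc (15:ℝ)*(k+1)+2 = (15*k+2) + 15 := by ring
        _ ≤ 2*4^k + 6*4^k := by linarith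
        _ = 2*4^(k+1) := by ring

lemma wchC_pos {n : ℕ} (hn : 2 ≤ n) : 0 < wchC n := by
  have h := wch_nat_ineq n hn
  unfold wchC
  have hf : (0:ℝ) < (Nat.factorial (2*n+1) : ℝ) := by positivity
  apply div_pos _ hf
  linarith

lemma wchC_ratio {n : ℕ} (hn : 2 ≤ n) :
    wchC (n + 1) * (((2*n+3) : ℝ) * ((2*n+2) : ℝ)) ≤ 6 * wchC n := by
  have h := wch_nat_ineq2 n hn
  unfold wchC
  have hfac : (Nat.factorial (2*(n+1)+1) : ℝ)
      = (((2*n+3):ℝ) * ((2*n+2):ℝ)) * (Nat.factorial (2*n+1) : ℝ) := by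
    have h1 : 2*(n+1)+1 = (2*n+2)+1 := by ring
    rw [h1, Nat.factorial_succ, Nat.factorial_succ]
    push_cast
    ring
  have hf : (0:ℝ) < (Nat.factorial (2*n+1) : ℝ) := by positivity
  have hc : (0:ℝ) < ((2*n+3):ℝ) * ((2*n+2):ℝ) := by positivity
  rw [hfac]
  have key : 2 * ((4:ℝ)^(n+1) - 3*((n:ℝ)+1) - 1) ≤ 6 * (2 * ((4:ℝ)^n - 3*(n:ℝ) - 1)) := by
    have h4 : (4:ℝ)^(n+1) = 4 * 4^n := by ring
    linarith [h4.le, h4.ge]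
  push_cast
  rw [div_mul_eq_mul_div, ← mul_div_assoc, div_le_div_iff₀ (by positivity) hf]
  nlinarith [mul_le_mul_of_nonneg_right key (le_of_lt (mul_pos hc hf)), hc.le, hf.le]

lemma wchC_zero : wchC 0 = 0 := by unfold wchC; norm_num

lemma wchC_one : wchC 1 = 0 := by unfold wchC; norm_num

lemma wch_hasSum (x : ℝ) :
    HasSum (fun n : ℕ => (-1:ℝ)^n * wchC n * x^(2*n+1))
      (Real.sin (2*x) + Real.sin x - 3*x*Real.cos x) := by
  have h1 := Real.hasSum_sin (2*x)
  have h2 := Real.hasSum_sin x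
  have h3 := (Real.hasSum_cos x).mul_left (3*x)
  have h := (h1.add h2).sub h3
  convert h using 1
  · rfl
  funext n
  have hfac : (((2*n+1).factorial : ℕ) : ℝ) = ((2*n+1):ℝ) * (((2*n).factorial : ℕ) : ℝ) := by
    rw [Nat.factorial_succ]; push_cast; ring
  have h2x : (2*x)^(2*n+1) = 2 * 4^n * x^(2*n+1) := by
    have h4 : (4:ℝ)^n = (2:ℝ)^(2*n) := by rw [pow_mul]; norm_num
    rw [mul_pow, h4, pow_succ]; ring
  unfold wchC
  have hf0 : (((2*n).factorial : ℕ) : ℝ) ≠ 0 := by positivity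
  have hn0 : ((2*n+1):ℝ) ≠ 0 := by positivity
  rw [hfac, h2x]
  push_cast
  field_simp
  ring

lemma wch_ratio_step {x : ℝ} (hx0 : 0 ≤ x) (hx2 : x^2 ≤ 5/2) {n : ℕ} (hn : 2 ≤ n) :
    wchC (n+1) * x^(2*(n+1)+1) ≤ (2/5) * (wchC n * x^(2*n+1)) := by
  have hr := wchC_ratio hn
  have hB : 0 < wchC n := wchC_pos hn
  have hA : 0 < wchC (n+1) := wchC_pos (by omega)
  have hnn : (2:ℝ) ≤ (n:ℝ) := by exact_mod_cast hn
  have h42 : (42:ℝ) ≤ ((2*n+3):ℝ) * ((2*n+2):ℝ) := by push_cast; nlinarith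
  have h42A : 42 * wchC (n+1) ≤ 6 * wchC n := by nlinarith
  have hkey : wchC (n+1) * x^2 ≤ (2/5) * wchC n := by nlinarith
  have hpow : x^(2*(n+1)+1) = x^2 * x^(2*n+1) := by
    rw [show 2*(n+1)+1 = 2+(2*n+1) from by ring, pow_add]
  rw [hpow]
  have hxp : (0:ℝ) ≤ x^(2*n+1) := by positivity
  calc wchC (n+1) * (x^2 * x^(2*n+1)) = (wchC (n+1) * x^2) * x^(2*n+1) := by ring
    _ ≤ ((2/5) * wchC n) * x^(2*n+1) := mul_le_mul_of_nonneg_right hkey hxp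
    _ = (2/5) * (wchC n * x^(2*n+1)) := by ring

lemma wch_decay {x : ℝ} (hx0 : 0 ≤ x) (hx2 : x^2 ≤ 5/2) {p : ℕ} (hp : 2 ≤ p) :
    ∀ j : ℕ, wchC (p+j) * x^(2*(p+j)+1) ≤ (wchC p * x^(2*p+1)) * (2/5)^j := by
  intro j
  induction j with
  | zero => simp
  | succ k ih =>
    have h1 : wchC (p+k+1) * x^(2*(p+k+1)+1) ≤ (2/5) * (wchC (p+k) * x^(2*(p+k)+1)) :=
      wch_ratio_step hx0 hx2 (by omega)
    have h2 : (2/5 : ℝ) * (wchC (p+k) * x^(2*(p+k)+1)) ≤ (2/5) * ((wchC p * x^(2*p+1)) * (2/5)^k) := by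
      linarith
    calc wchC (p+(k+1)) * x^(2*(p+(k+1))+1) = wchC (p+k+1) * x^(2*(p+k+1)+1) := by ring_nf
      _ ≤ (2/5) * ((wchC p * x^(2*p+1)) * (2/5)^k) := le_trans h1 h2
      _ = (wchC p * x^(2*p+1)) * (2/5)^(k+1) := by ring

theorem two_sinx_div_x_add_tanx_div_x_error :
    ∀ x ∈ Set.Ioo (0 : ℝ) (π / 2), ∀ m : ℕ, 2 ≤ m →
      |2 * (Real.sin x / x) + Real.tan x / x
          - (3 + (1 / Real.cos x) *
              ∑ k ∈ Finset.Icc 2 m, (-1 : ℝ) ^ k * wchC k * x ^ (2 * k))|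
        < wchC (m + 1) * x ^ (2 * m + 2) / Real.cos x := by
  intro x hx m hm
  obtain ⟨hx0, hxlt⟩ := hx
  have hpi : π < 3.15 := Real.pi_lt_d2
  have hcos : 0 < Real.cos x := Real.cos_pos_of_mem_Ioo ⟨by nlinarith [Real.pi_pos], hxlt⟩
  have hx2 : x^2 ≤ 5/2 := by nlinarith
  set a : ℕ → ℝ := fun n => wchC n * x^(2*n+1) with ha
  set g : ℕ → ℝ := fun n => (-1:ℝ)^n * wchC n * x^(2*n+1) with hg
  have hapos : ∀ n, 2 ≤ n → 0 < a n := fun n hn => mul_pos (wchC_pos hn) (by positivity)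
  have habs : ∀ n, 2 ≤ n → |g n| = a n := by
    intro n hn
    simp only [hg, ha, abs_mul, abs_pow, abs_neg, abs_one, one_pow, one_mul]
    rw [abs_of_pos (wchC_pos hn), abs_of_pos hx0]
  have hgsum : HasSum g (Real.sin (2*x) + Real.sin x - 3*x*Real.cos x) := wch_hasSum x
  have hsummable : Summable g := hgsum.summable
  -- split off the first m+1 terms
  have hsplit := Summable.sum_add_tsum_nat_add (f := g) (m+1) hsummable
  set T : ℝ := ∑' i, g (i + (m+1)) with hT
  -- the finite part equals x * S
  have hfin : ∑ i ∈ Finset.range (m+1), g i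
      = (∑ k ∈ Finset.Icc 2 m, (-1:ℝ)^k * wchC k * x^(2*k)) * x := by
    rw [← Finset.sum_subset (show Finset.Icc 2 m ⊆ Finset.range (m+1) by
          intro i hi; simp only [Finset.mem_Icc] at hi; simp [Finset.mem_range]; omega)]
    · rw [Finset.sum_mul]
      apply Finset.sum_congr rfl
      intro k hk
      simp only [hg]
      rw [pow_succ]
      ring
    · intro i hi hni
      simp only [Finset.mem_range] at hi
      simp only [Finset.mem_Icc] at hni
      have : i = 0 ∨ i = 1 := by omega
      rcases this with h | h <;> simp [hg, h, wchC_zero, wchC_one]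
  -- peel two terms from the tail
  have hsum1 : Summable fun i => g (i + (m+1)) := (summable_nat_add_iff (m+1)).2 hsummable
  have hpeel := Summable.sum_add_tsum_nat_add (f := fun i => g (i + (m+1))) 2 hsum1
  have hshift : (fun i => g (i + 2 + (m+1))) = fun i => g (i + (m+3)) := by
    funext i; congr 1; omega
  rw [hshift] at hpeel
  set T2 : ℝ := ∑' i, g (i + (m+3)) with hT2def
  have hrange2 : ∑ i ∈ Finset.range 2, g (i + (m+1)) = g (m+1) + g (m+2) := by
    rw [Finset.sum_range_succ, Finset.sum_range_one]
    have e1 : 0 + (m+1) = m+1 := by omega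
    have e2 : 1 + (m+1) = m+2 := by omega
    rw [e1, e2]
  -- geometric bound on T2
  have hgeo : HasSum (fun j : ℕ => a (m+3) * (2/5)^j) (a (m+3) * (5/3)) := by
    have h := (hasSum_geometric_of_lt_one (by norm_num : (0:ℝ) ≤ 2/5)
      (by norm_num : (2/5:ℝ) < 1)).mul_left (a (m+3))
    convert h using 2
    · rfl
    norm_num
  have hT2bound : |T2| ≤ a (m+3) * (5/3) := by
    rw [hT2def, ← Real.norm_eq_abs]
    apply tsum_of_norm_bounded hgeo
    intro j
    rw [Real.norm_eq_abs, habs (j + (m+3)) (by omega)]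
    have := wch_decay hx0.le hx2 (show 2 ≤ m+3 by omega) j
    calc a (j + (m+3)) = wchC ((m+3)+j) * x^(2*((m+3)+j)+1) := by rw [add_comm]
      _ ≤ (wchC (m+3) * x^(2*(m+3)+1)) * (2/5)^j := this
      _ = a (m+3) * (2/5)^j := rfl
  -- ratios between consecutive a's
  have hr1 : a (m+2) ≤ (2/5) * a (m+1) := wch_ratio_step hx0.le hx2 (by omega)
  have hr2 : a (m+3) ≤ (2/5) * a (m+2) := by
    have := wch_ratio_step hx0.le hx2 (show 2 ≤ m+2 by omega)
    simpa using this
  have ha1 : 0 < a (m+1) := hapos _ (by omega)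
  have ha2 : 0 < a (m+2) := hapos _ (by omega)
  -- sign analysis
  set s : ℝ := (-1:ℝ)^(m+1) with hs
  have hss : s * s = 1 := by
    simp only [hs, ← pow_add]
    exact (neg_one_pow_eq_one_iff_even (by norm_num)).2 ⟨m+1, rfl⟩
  have habs_s : |s| = 1 := by simp [hs]
  have hg1 : g (m+1) = s * a (m+1) := by simp only [hg, ha, hs]; ring
  have hg2 : g (m+2) = -(s * a (m+2)) := by
    simp only [hg, ha, hs]
    rw [pow_succ]
    ring
  have hTval : T = g (m+1) + g (m+2) + T2 := by
    beta_reduce at hpeel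
    rw [hrange2] at hpeel
    rw [hT, ← hpeel]
  have hsT2 : |s * T2| ≤ (2/3) * a (m+2) := by
    rw [abs_mul, habs_s, one_mul]
    linarith
  have hsT : s * T = a (m+1) - a (m+2) + s * T2 := by
    rw [hTval, hg1, hg2]
    have : s * (s * a (m+1) + -(s * a (m+2)) + T2)
        = (s*s) * a (m+1) - (s*s) * a (m+2) + s * T2 := by ring
    rw [this, hss]
    ring
  have hTbound : |T| < a (m+1) := by
    have h1 : |s * T2| ≤ (2/3) * a (m+2) := hsT2
    have habs' : |s * T| = |T| := by rw [abs_mul, habs_s, one_mul]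
    rw [← habs']
    rw [abs_lt]
    have := abs_le.1 h1
    constructor
    · rw [hsT]; linarith
    · rw [hsT]; linarith
  -- final assembly
  have hx0' : x ≠ 0 := ne_of_gt hx0
  have hc0 : Real.cos x ≠ 0 := ne_of_gt hcos
  have hxc : 0 < x * Real.cos x := mul_pos hx0 hcos
  set S : ℝ := ∑ k ∈ Finset.Icc 2 m, (-1:ℝ)^k * wchC k * x^(2*k) with hS
  set E : ℝ := 2 * (Real.sin x / x) + Real.tan x / x - (3 + (1 / Real.cos x) * S) with hE
  have hTeq : E * (x * Real.cos x) = T := by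
    have hTrw : T = (Real.sin (2*x) + Real.sin x - 3*x*Real.cos x) - S * x := by
      rw [hgsum.tsum_eq] at hsplit
      linarith [hsplit, hfin]
    rw [hTrw, Real.sin_two_mul, hE, Real.tan_eq_sin_div_cos]
    field_simp
    ring
  rw [← mul_lt_mul_iff_of_pos_right hxc]
  have hL : |E| * (x * Real.cos x) = |T| := by
    rw [← hTeq, abs_mul, abs_of_pos hxc]
  have hR : (wchC (m+1) * x^(2*m+2) / Real.cos x) * (x * Real.cos x) = a (m+1) := by
    field_simp
    ring
  rw [hL, hR]
  exact hTbound
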